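/- For any real matrices A ∈ ℝ^{m×r}, B ∈ ℝ^{n×r}, | ‖ABᵀ‖_* − (‖A‖_F² + ‖B‖_F²)/2 | ≤ √(‖AᵀA − BᵀB‖_*) · (‖A‖_* + ‖B‖_*)/2. -/

import Mathlib

open Matrix

/-- Squared Frobenius norm of a real matrix. -/
noncomputable def frobSq {m n : ℕ} (A : Matrix (Fin m) (Fin n) ℝ) : ℝ :=
  ∑ i, ∑ j, (A i j) ^ 2

/-- Frobenius norm. -/
noncomputable def frobNorm {m n : ℕ} (A : Matrix (Fin m) (Fin n) ℝ) : ℝ :=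
  Real.sqrt (frobSq A)

lemma wwT_posSemidef {m n : ℕ} (W : Matrix (Fin m) (Fin n) ℝ) :
    (W * Wᵀ).PosSemidef := by
  simpa [Matrix.conjTranspose_eq_transpose_of_trivial] using
    W.posSemidef_self_mul_conjTranspose

/-- Nuclear norm: trace of the PSD square root of `W * Wᵀ`. -/
noncomputable def nuclearNorm {m n : ℕ} (W : Matrix (Fin m) (Fin n) ℝ) : ℝ :=
  ((wwT_posSemidef W).1.eigenvectorUnitary.1 *
    diagonal ((√·) ∘ (wwT_posSemidef W).1.eigenvalues) *
    (star (wwT_posSemidef W).1.eigenvectorUnitary : Matrix (Fin m) (Fin m) ℝ)).trace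

namespace NucAux

noncomputable def psqrt {m n : ℕ} (W : Matrix (Fin m) (Fin n) ℝ) : Matrix (Fin m) (Fin m) ℝ :=
  (wwT_posSemidef W).1.eigenvectorUnitary.1 *
    diagonal ((√·) ∘ (wwT_posSemidef W).1.eigenvalues) *
    (star (wwT_posSemidef W).1.eigenvectorUnitary : Matrix (Fin m) (Fin m) ℝ)

lemma nuclearNorm_eq {m n : ℕ} (W : Matrix (Fin m) (Fin n) ℝ) :
    nuclearNorm W = (psqrt W).trace := rfl

open scoped MatrixOrder in
lemma psqrt_eq_cfc {m n : ℕ} (W : Matrix (Fin m) (Fin n) ℝ) :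
    psqrt W = CFC.sqrt (W * Wᵀ) := by
  rw [CFC.sqrt_eq_real_sqrt _ (Matrix.nonneg_iff_posSemidef.2 (wwT_posSemidef W)), cfcₙ_eq_cfc,
    (wwT_posSemidef W).1.cfc_eq, Matrix.IsHermitian.cfc, psqrt, RCLike.ofReal_real_eq_id,
    Function.id_comp]
  rfl

open scoped MatrixOrder in
lemma psqrt_psd {m n : ℕ} (W : Matrix (Fin m) (Fin n) ℝ) : (psqrt W).PosSemidef := by
  rw [psqrt_eq_cfc]
  exact Matrix.nonneg_iff_posSemidef.1 (CFC.sqrt_nonneg _)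

open scoped MatrixOrder in
lemma psqrt_mul_self {m n : ℕ} (W : Matrix (Fin m) (Fin n) ℝ) :
    psqrt W * psqrt W = W * Wᵀ := by
  rw [psqrt_eq_cfc]
  exact CFC.sqrt_mul_sqrt_self _ (Matrix.nonneg_iff_posSemidef.2 (wwT_posSemidef W))

open scoped MatrixOrder in
lemma eq_psqrt_of_sq_eq {m n : ℕ} {W : Matrix (Fin m) (Fin n) ℝ} {R : Matrix (Fin m) (Fin m) ℝ}
    (hR : R.PosSemidef) (h : R ^ 2 = W * Wᵀ) : R = psqrt W := by
  rw [psqrt_eq_cfc, ← h]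
  exact (CFC.sqrt_unique (a := R ^ 2) (b := R) (pow_two R).symm
    (Matrix.nonneg_iff_posSemidef.2 hR)).symm



lemma psd_conj {k m : ℕ} {M : Matrix (Fin k) (Fin k) ℝ} (hM : M.PosSemidef)
    (C : Matrix (Fin m) (Fin k) ℝ) : (C * M * Cᵀ).PosSemidef := by
  simpa [Matrix.conjTranspose_eq_transpose_of_trivial] using hM.mul_mul_conjTranspose_same C

lemma psd_conj' {k m : ℕ} {M : Matrix (Fin k) (Fin k) ℝ} (hM : M.PosSemidef)
    (C : Matrix (Fin k) (Fin m) ℝ) : (Cᵀ * M * C).PosSemidef := by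
  simpa [Matrix.conjTranspose_eq_transpose_of_trivial] using hM.conjTranspose_mul_mul_same C

lemma psd_diag_nonneg {k : ℕ} {M : Matrix (Fin k) (Fin k) ℝ} (hM : M.PosSemidef) (i : Fin k) :
    0 ≤ M i i := by
  exact hM.diag_nonneg

lemma psd_trace_nonneg {k : ℕ} {M : Matrix (Fin k) (Fin k) ℝ} (hM : M.PosSemidef) :
    0 ≤ M.trace := by
  rw [Matrix.trace]
  exact Finset.sum_nonneg fun i _ => psd_diag_nonneg hM i

lemma eq_zero_of_mul_transpose_self {m n : ℕ} {M : Matrix (Fin m) (Fin n) ℝ}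
    (h : M * Mᵀ = 0) : M = 0 := by
  have ht : (M * Mᵀ).trace = 0 := by rw [h]; simp
  have : ∑ i, ∑ j, (M i j) ^ 2 = 0 := by
    rw [Matrix.trace] at ht
    convert ht using 1
    refine Finset.sum_congr rfl fun i _ => ?_
    simp [Matrix.mul_apply, Matrix.diag, sq]
  have hz : ∀ i ∈ Finset.univ, ∀ j ∈ Finset.univ, (M i j) ^ 2 = 0 := by
    have h1 : ∀ i ∈ (Finset.univ : Finset (Fin m)), ∑ j, (M i j)^2 = 0 := by
      refine (Finset.sum_eq_zero_iff_of_nonneg ?_).mp this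
      intro i _; exact Finset.sum_nonneg fun j _ => sq_nonneg _
    intro i hi j hj
    exact (Finset.sum_eq_zero_iff_of_nonneg (fun j _ => sq_nonneg _)).mp (h1 i hi) j hj
  ext i j
  simpa using pow_eq_zero_iff (n := 2) (by norm_num) |>.mp (hz i (by simp) j (by simp))

lemma spectral {k : ℕ} {H : Matrix (Fin k) (Fin k) ℝ} (hH : H.IsHermitian) :
    ∃ V : Matrix (Fin k) (Fin k) ℝ, V * Vᵀ = 1 ∧ Vᵀ * V = 1 ∧
      H = V * Matrix.diagonal hH.eigenvalues * Vᵀ := by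
  refine ⟨(hH.eigenvectorUnitary : Matrix (Fin k) (Fin k) ℝ), ?_, ?_, ?_⟩
  · have := (Unitary.mem_iff.mp hH.eigenvectorUnitary.2).2
    simpa [Matrix.star_eq_conjTranspose,
      Matrix.conjTranspose_eq_transpose_of_trivial] using this
  · have := (Unitary.mem_iff.mp hH.eigenvectorUnitary.2).1
    simpa [Matrix.star_eq_conjTranspose,
      Matrix.conjTranspose_eq_transpose_of_trivial] using this
  · have := hH.spectral_theorem
    rw [RCLike.ofReal_real_eq_id] at this
    simpa [Matrix.star_eq_conjTranspose,
      Matrix.conjTranspose_eq_transpose_of_trivial, Function.id_comp] using this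

lemma conj_mul_conj {k : ℕ} {V : Matrix (Fin k) (Fin k) ℝ} (hV : Vᵀ * V = 1)
    (a b : Fin k → ℝ) :
    (V * Matrix.diagonal a * Vᵀ) * (V * Matrix.diagonal b * Vᵀ)
      = V * Matrix.diagonal (fun i => a i * b i) * Vᵀ := by
  calc (V * Matrix.diagonal a * Vᵀ) * (V * Matrix.diagonal b * Vᵀ)
      = V * (Matrix.diagonal a * ((Vᵀ * V) * Matrix.diagonal b)) * Vᵀ := by
        simp only [Matrix.mul_assoc]
    _ = V * Matrix.diagonal (fun i => a i * b i) * Vᵀ := by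
        rw [hV, Matrix.one_mul, Matrix.diagonal_mul_diagonal]

lemma trace_conj {k : ℕ} {V : Matrix (Fin k) (Fin k) ℝ} (hV : Vᵀ * V = 1)
    (M : Matrix (Fin k) (Fin k) ℝ) : (V * M * Vᵀ).trace = M.trace := by
  rw [Matrix.trace_mul_comm, ← Matrix.mul_assoc, hV, Matrix.one_mul]

lemma psd_conj_diag {k : ℕ} {V : Matrix (Fin k) (Fin k) ℝ} (a : Fin k → ℝ)
    (ha : ∀ i, 0 ≤ a i) : (V * Matrix.diagonal a * Vᵀ).PosSemidef :=
  psd_conj (Matrix.posSemidef_diagonal_iff.mpr ha) V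


lemma polar {m n : ℕ} (W : Matrix (Fin m) (Fin n) ℝ) :
    ∃ U : Matrix (Fin m) (Fin n) ℝ,
      psqrt W * U = W ∧
      U * Uᵀ * psqrt W = psqrt W ∧
      (1 - Uᵀ * U).PosSemidef ∧ (1 - U * Uᵀ).PosSemidef := by
  have hG := wwT_posSemidef W
  set P := psqrt W with hPdef
  have hP : P.PosSemidef := psqrt_psd W
  have hPP : P * P = W * Wᵀ := psqrt_mul_self W
  obtain ⟨V, hVVt, hVtV, hPspec⟩ := spectral hP.1
  set lam := hP.1.eigenvalues with hlamdef
  have hlam : ∀ i, 0 ≤ lam i := fun i => hP.eigenvalues_nonneg i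
  set g : Fin m → ℝ := fun i => if lam i = 0 then 0 else (lam i)⁻¹ with hg
  set e : Fin m → ℝ := fun i => if lam i = 0 then 0 else 1 with he
  set Pinv := V * Matrix.diagonal g * Vᵀ with hPinvdef
  set Pr := V * Matrix.diagonal e * Vᵀ with hPrdef
  have hge : (fun i => g i * lam i) = e := by
    funext i; by_cases h : lam i = 0 <;> simp [hg, he, h, inv_mul_cancel₀]
  have heg : (fun i => e i * g i) = g := by
    funext i; by_cases h : lam i = 0 <;> simp [hg, he, h]
  have helam : (fun i => e i * lam i) = lam := by
    funext i; by_cases h : lam i = 0 <;> simp [he, h]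
  have hlame : (fun i => lam i * e i) = lam := by
    funext i; by_cases h : lam i = 0 <;> simp [he, h]
  have hee : (fun i => e i * e i) = e := by
    funext i; by_cases h : lam i = 0 <;> simp [he, h]
  have hPinvP : Pinv * P = Pr := by
    rw [hPinvdef, hPspec, conj_mul_conj hVtV, hge]
  have hPPinv : P * Pinv = Pr := by
    rw [hPinvdef, hPspec, conj_mul_conj hVtV]
    rw [show (fun i => lam i * g i) = e by funext i; by_cases h : lam i = 0 <;>
      simp [hg, he, h, mul_inv_cancel₀]]
  have hPrP : Pr * P = P := by
    rw [hPrdef, hPspec, conj_mul_conj hVtV, helam, ← hPspec]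
  have hPPr : P * Pr = P := by
    rw [hPrdef, hPspec, conj_mul_conj hVtV, hlame, ← hPspec]
  have hPrPinv : Pr * Pinv = Pinv := by
    rw [hPrdef, hPinvdef, conj_mul_conj hVtV, heg]
  have hPinvt : Pinvᵀ = Pinv := by
    rw [hPinvdef]
    simp [Matrix.transpose_mul, Matrix.diagonal_transpose, Matrix.mul_assoc]
  have hPrW : Pr * W = W := by
    have key : Pr * (W * Wᵀ) = W * Wᵀ := by rw [← hPP, ← Matrix.mul_assoc, hPrP]
    have key2 : (W * Wᵀ) * Pr = W * Wᵀ := by rw [← hPP, Matrix.mul_assoc, hPPr]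
    have hPrt : Prᵀ = Pr := by
      rw [hPrdef]
      simp [Matrix.transpose_mul, Matrix.diagonal_transpose, Matrix.mul_assoc]
    have hz : (Pr * W - W) * (Pr * W - W)ᵀ = 0 := by
      have expand : (Pr * W - W) * (Pr * W - W)ᵀ
          = Pr * (W * Wᵀ) * Pr - Pr * (W * Wᵀ) - (W * Wᵀ) * Pr + W * Wᵀ := by
        rw [Matrix.transpose_sub, Matrix.transpose_mul, hPrt, Matrix.sub_mul,
          Matrix.mul_sub, Matrix.mul_sub]
        simp only [← Matrix.mul_assoc]
        abel
      rw [expand, key, key2]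
      abel
    have := eq_zero_of_mul_transpose_self hz
    rwa [sub_eq_zero] at this
  refine ⟨Pinv * W, ?_, ?_, ?_, ?_⟩
  · rw [← Matrix.mul_assoc, hPPinv, hPrW]
  · have hUUt : (Pinv * W) * (Pinv * W)ᵀ = Pr := by
      rw [Matrix.transpose_mul, hPinvt]
      calc Pinv * W * (Wᵀ * Pinv) = Pinv * (W * Wᵀ) * Pinv := by
            simp only [Matrix.mul_assoc]
        _ = Pinv * (P * P) * Pinv := by rw [hPP]
        _ = ((Pinv * P) * P) * Pinv := by simp only [Matrix.mul_assoc]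
        _ = P * Pinv := by rw [hPinvP, hPrP]
        _ = Pr := hPPinv
    rw [hUUt, hPrP]
  · set M := (Pinv * W)ᵀ * (Pinv * W) with hM
    have hMt : Mᵀ = M := by rw [hM]; simp [Matrix.transpose_mul]
    have hPrU : Pr * (Pinv * W) = Pinv * W := by
      rw [← Matrix.mul_assoc, hPrPinv]
    have hUUt : (Pinv * W) * (Pinv * W)ᵀ = Pr := by
      rw [Matrix.transpose_mul, hPinvt]
      calc Pinv * W * (Wᵀ * Pinv) = Pinv * (W * Wᵀ) * Pinv := by
            simp only [Matrix.mul_assoc]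
        _ = Pinv * (P * P) * Pinv := by rw [hPP]
        _ = ((Pinv * P) * P) * Pinv := by simp only [Matrix.mul_assoc]
        _ = P * Pinv := by rw [hPinvP, hPrP]
        _ = Pr := hPPinv
    have hMM : M * M = M := by
      calc M * M = (Pinv * W)ᵀ * ((Pinv * W) * (Pinv * W)ᵀ) * (Pinv * W) := by
            rw [hM]; simp only [Matrix.mul_assoc]
        _ = (Pinv * W)ᵀ * (Pr * (Pinv * W)) := by rw [hUUt]; simp only [Matrix.mul_assoc]
        _ = M := by rw [hPrU, hM]
    have hfact : (1 - M) = (1 - M) * (1 - M)ᵀ := by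
      rw [Matrix.transpose_sub, Matrix.transpose_one, hMt]
      rw [Matrix.mul_sub, Matrix.sub_mul, Matrix.sub_mul, hMM]
      simp only [Matrix.one_mul, Matrix.mul_one]
      abel
    rw [hfact]
    exact wwT_posSemidef (1 - M)
  · have hUUt : (Pinv * W) * (Pinv * W)ᵀ = Pr := by
      rw [Matrix.transpose_mul, hPinvt]
      calc Pinv * W * (Wᵀ * Pinv) = Pinv * (W * Wᵀ) * Pinv := by
            simp only [Matrix.mul_assoc]
        _ = Pinv * (P * P) * Pinv := by rw [hPP]
        _ = ((Pinv * P) * P) * Pinv := by simp only [Matrix.mul_assoc]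
        _ = P * Pinv := by rw [hPinvP, hPrP]
        _ = Pr := hPPinv
    rw [hUUt]
    have hone : (1 : Matrix (Fin m) (Fin m) ℝ) = V * Matrix.diagonal (fun _ => (1:ℝ)) * Vᵀ := by
      simp [Matrix.diagonal_one, hVVt]
    have : (1 : Matrix (Fin m) (Fin m) ℝ) - Pr
        = V * Matrix.diagonal (fun i => 1 - e i) * Vᵀ := by
      rw [hone, hPrdef]
      rw [show Matrix.diagonal (fun i => (1:ℝ) - e i)
            = Matrix.diagonal (fun _ => (1:ℝ)) - Matrix.diagonal e by
          rw [Matrix.diagonal_sub]]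
      rw [Matrix.mul_sub, Matrix.sub_mul]
    rw [this]
    exact psd_conj_diag _ (fun i => by by_cases h : lam i = 0 <;> simp [he, h])

lemma trace_diagonal_mul {k : ℕ} (d : Fin k → ℝ) (N : Matrix (Fin k) (Fin k) ℝ) :
    (Matrix.diagonal d * N).trace = ∑ i, d i * N i i := by
  simp [Matrix.trace, Matrix.diag, Matrix.diagonal_mul]

lemma trace_conj' {k : ℕ} {V : Matrix (Fin k) (Fin k) ℝ} (hV : V * Vᵀ = 1)
    (M : Matrix (Fin k) (Fin k) ℝ) : (Vᵀ * M * V).trace = M.trace := by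
  rw [Matrix.trace_mul_comm, ← Matrix.mul_assoc, hV, Matrix.one_mul]

lemma contraction_diag_le_one {k : ℕ} {K : Matrix (Fin k) (Fin k) ℝ}
    (hK : (1 - Kᵀ * K).PosSemidef) (i : Fin k) : K i i ≤ 1 := by
  have h0 := psd_diag_nonneg hK i
  have h1 : (Kᵀ * K) i i ≤ 1 := by
    simp only [Matrix.sub_apply, Matrix.one_apply_eq] at h0
    linarith
  have h2 : (K i i) ^ 2 ≤ (Kᵀ * K) i i := by
    have he : (Kᵀ * K) i i = ∑ j, (K j i) ^ 2 := by
      simp [Matrix.mul_apply, sq]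
    rw [he]
    exact Finset.single_le_sum (f := fun j => (K j i) ^ 2)
      (fun j _ => sq_nonneg _) (Finset.mem_univ i)
  nlinarith

lemma trace_mul_contraction_le {k : ℕ} {P K : Matrix (Fin k) (Fin k) ℝ} (hP : P.PosSemidef)
    (hK : (1 - Kᵀ * K).PosSemidef) : (P * K).trace ≤ P.trace := by
  obtain ⟨V, hVVt, hVtV, hspec⟩ := spectral hP.1
  set lam := hP.1.eigenvalues with hlamdef
  have hlam : ∀ i, 0 ≤ lam i := fun i => hP.eigenvalues_nonneg i
  set K' := Vᵀ * K * V with hK'def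
  have htr : (P * K).trace = ∑ i, lam i * K' i i := by
    rw [hspec]
    have e1 : V * Matrix.diagonal lam * Vᵀ * K = V * (Matrix.diagonal lam * (Vᵀ * K)) := by
      simp only [Matrix.mul_assoc]
    rw [e1, Matrix.trace_mul_comm, Matrix.mul_assoc, ← hK'def]
    exact trace_diagonal_mul _ _
  have hK'c : (1 - K'ᵀ * K').PosSemidef := by
    have e2 : K'ᵀ * K' = Vᵀ * (Kᵀ * K) * V := by
      rw [hK'def]
      calc (Vᵀ * K * V)ᵀ * (Vᵀ * K * V) = Vᵀ * Kᵀ * (V * Vᵀ) * K * V := by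
            simp only [Matrix.transpose_mul, Matrix.transpose_transpose, Matrix.mul_assoc]
        _ = Vᵀ * (Kᵀ * K) * V := by rw [hVVt]; simp only [Matrix.mul_one, Matrix.mul_assoc]
    have e3 : (1 : Matrix (Fin k) (Fin k) ℝ) - K'ᵀ * K' = Vᵀ * (1 - Kᵀ * K) * V := by
      rw [e2, Matrix.mul_sub, Matrix.sub_mul, Matrix.mul_one, hVtV]
    rw [e3]
    exact psd_conj' hK V
  have htrP : P.trace = ∑ i, lam i := by
    rw [hspec, trace_conj hVtV, Matrix.trace_diagonal]
  rw [htr, htrP]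
  exact Finset.sum_le_sum fun i _ => by
    have := contraction_diag_le_one hK'c i
    nlinarith [hlam i]

lemma nuclearNorm_nonneg {m n : ℕ} (W : Matrix (Fin m) (Fin n) ℝ) : 0 ≤ nuclearNorm W :=
  psd_trace_nonneg (psqrt_psd W)

lemma nuclearNorm_eq_trace_polar {m n : ℕ} {W U : Matrix (Fin m) (Fin n) ℝ}
    (hPU : psqrt W * U = W)
    (hUUtP : U * Uᵀ * psqrt W = psqrt W) :
    nuclearNorm W = (W * Uᵀ).trace := by
  have e : W * Uᵀ = psqrt W * (U * Uᵀ) := by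
    conv_lhs => rw [← hPU]
    rw [Matrix.mul_assoc]
  rw [nuclearNorm_eq, e, Matrix.trace_mul_comm, hUUtP]

lemma trace_le_nuclearNorm {m n : ℕ} (W Q : Matrix (Fin m) (Fin n) ℝ)
    (h1 : (1 - Qᵀ * Q).PosSemidef) (h2 : (1 - Q * Qᵀ).PosSemidef) :
    (Qᵀ * W).trace ≤ nuclearNorm W := by
  obtain ⟨U, hPU, hUUtP, hU1, hU2⟩ := polar W
  have hP : (psqrt W).PosSemidef := psqrt_psd W
  have e1 : (Qᵀ * W).trace = (psqrt W * (U * Qᵀ)).trace := by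
    have e0 : Qᵀ * W = Qᵀ * (psqrt W * U) := by rw [hPU]
    rw [e0, Matrix.trace_mul_comm, Matrix.mul_assoc]
  rw [e1]
  have hKc : (1 - (U * Qᵀ)ᵀ * (U * Qᵀ)).PosSemidef := by
    have e2 : (U * Qᵀ)ᵀ * (U * Qᵀ) = Q * (Uᵀ * U) * Qᵀ := by
      simp only [Matrix.transpose_mul, Matrix.transpose_transpose, Matrix.mul_assoc]
    have e3 : Q * (1 - Uᵀ * U) * Qᵀ = Q * Qᵀ - Q * (Uᵀ * U) * Qᵀ := by
      rw [Matrix.mul_sub, Matrix.sub_mul, Matrix.mul_one]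
    have e4 : 1 - (U * Qᵀ)ᵀ * (U * Qᵀ) = (1 - Q * Qᵀ) + Q * (1 - Uᵀ * U) * Qᵀ := by
      rw [e2, e3]; abel
    rw [e4]
    exact h2.add (psd_conj hU1 Q)
  exact trace_mul_contraction_le hP hKc

lemma exists_balanced {m r : ℕ} (A : Matrix (Fin m) (Fin r) ℝ) :
    ∃ (X : Matrix (Fin r) (Fin r) ℝ) (U : Matrix (Fin m) (Fin r) ℝ),
      X.PosSemidef ∧ Uᵀ * A = X ∧ X * X = Aᵀ * A ∧ X.trace = nuclearNorm A ∧
      (1 - Uᵀ * U).PosSemidef ∧ (1 - U * Uᵀ).PosSemidef := by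
  obtain ⟨U, hPU, hUUtP, hU1, hU2⟩ := polar A
  set P := psqrt A with hPdef
  have hP : P.PosSemidef := psqrt_psd A
  have hPt : Pᵀ = P := by
    have h := hP.1.eq
    rwa [Matrix.conjTranspose_eq_transpose_of_trivial] at h
  have hPUUt : P * (U * Uᵀ) = P := by
    have := congrArg Matrix.transpose hUUtP
    simp only [Matrix.transpose_mul, Matrix.transpose_transpose, hPt] at this
    exact this
  have hAUt : A * Uᵀ = P := by
    rw [← hPU, Matrix.mul_assoc, hPUUt]
  refine ⟨Uᵀ * A, U, ?_, rfl, ?_, ?_, hU1, hU2⟩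
  · have : Uᵀ * A = Uᵀ * P * U := by rw [← hPU, Matrix.mul_assoc]
    rw [this]
    exact psd_conj' hP U
  · calc (Uᵀ * A) * (Uᵀ * A) = Uᵀ * (A * Uᵀ) * A := by simp only [Matrix.mul_assoc]
      _ = Uᵀ * P * A := by rw [hAUt]
      _ = (P * U)ᵀ * A := by rw [Matrix.transpose_mul, hPt]
      _ = Aᵀ * A := by rw [hPU]
  · rw [Matrix.trace_mul_comm, hAUt, nuclearNorm_eq]

lemma nuclearNorm_symm {k : ℕ} {H : Matrix (Fin k) (Fin k) ℝ} (hH : H.IsHermitian) :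
    nuclearNorm H = ∑ i, |hH.eigenvalues i| := by
  obtain ⟨V, hVVt, hVtV, hspec⟩ := spectral hH
  have hHt : Hᵀ = H := by
    have h := hH.eq
    rwa [Matrix.conjTranspose_eq_transpose_of_trivial] at h
  set R := V * Matrix.diagonal (fun i => |hH.eigenvalues i|) * Vᵀ with hRdef
  have hRpsd : R.PosSemidef := psd_conj_diag _ (fun i => abs_nonneg _)
  have hRR : R ^ 2 = H * Hᵀ := by
    rw [pow_two, hHt, hRdef, conj_mul_conj hVtV]
    rw [show (fun i => |hH.eigenvalues i| * |hH.eigenvalues i|)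
        = (fun i => hH.eigenvalues i * hH.eigenvalues i) by
      funext i; rw [abs_mul_abs_self]]
    conv_rhs => rw [hspec]
    rw [conj_mul_conj hVtV]
  have hReq : R = psqrt H := eq_psqrt_of_sq_eq hRpsd hRR
  rw [nuclearNorm_eq, ← hReq, hRdef, trace_conj hVtV, Matrix.trace_diagonal]

lemma frobSq_eq_trace {m r : ℕ} (A : Matrix (Fin m) (Fin r) ℝ) :
    frobSq A = (Aᵀ * A).trace := by
  rw [frobSq, Matrix.trace]
  rw [Finset.sum_comm]
  refine Finset.sum_congr rfl fun j _ => ?_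
  simp [Matrix.mul_apply, Matrix.diag, sq]

lemma frobSq_nonneg {m r : ℕ} (A : Matrix (Fin m) (Fin r) ℝ) : 0 ≤ frobSq A :=
  Finset.sum_nonneg fun i _ => Finset.sum_nonneg fun j _ => sq_nonneg _

lemma trace_CS {n r : ℕ} (B M : Matrix (Fin n) (Fin r) ℝ) :
    (Bᵀ * M).trace ≤ Real.sqrt (frobSq M) * Real.sqrt (frobSq B) := by
  have h1 : (Bᵀ * M).trace = ∑ p : Fin n × Fin r, B p.1 p.2 * M p.1 p.2 := by
    rw [Matrix.trace, Fintype.sum_prod_type]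
    rw [Finset.sum_comm]
    refine Finset.sum_congr rfl fun j _ => ?_
    simp [Matrix.mul_apply, Matrix.diag]
  have h2 : frobSq B = ∑ p : Fin n × Fin r, (B p.1 p.2) ^ 2 := by
    rw [frobSq, Fintype.sum_prod_type]
  have h3 : frobSq M = ∑ p : Fin n × Fin r, (M p.1 p.2) ^ 2 := by
    rw [frobSq, Fintype.sum_prod_type]
  have hcs := Finset.sum_mul_sq_le_sq_mul_sq Finset.univ
    (fun p : Fin n × Fin r => B p.1 p.2) (fun p => M p.1 p.2)
  rw [h1, h2, h3]
  have hle : (∑ p : Fin n × Fin r, B p.1 p.2 * M p.1 p.2) ^ 2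
      ≤ (∑ p : Fin n × Fin r, (M p.1 p.2) ^ 2) * (∑ p : Fin n × Fin r, (B p.1 p.2) ^ 2) := by
    rw [mul_comm]; exact hcs
  calc ∑ p : Fin n × Fin r, B p.1 p.2 * M p.1 p.2
      ≤ Real.sqrt ((∑ p : Fin n × Fin r, B p.1 p.2 * M p.1 p.2) ^ 2) :=
        Real.le_sqrt_of_sq_le le_rfl
    _ ≤ Real.sqrt ((∑ p : Fin n × Fin r, (M p.1 p.2) ^ 2)
          * (∑ p : Fin n × Fin r, (B p.1 p.2) ^ 2)) := Real.sqrt_le_sqrt hle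
    _ = _ := Real.sqrt_mul (Finset.sum_nonneg fun p _ => sq_nonneg _) _

lemma nuclear_le_half {m n r : ℕ} (A : Matrix (Fin m) (Fin r) ℝ) (B : Matrix (Fin n) (Fin r) ℝ) :
    nuclearNorm (A * Bᵀ) ≤ (frobSq A + frobSq B) / 2 := by
  obtain ⟨U, hPU, hUUtP, hU1, hU2⟩ := polar (A * Bᵀ)
  have h0 : nuclearNorm (A * Bᵀ) = ((A * Bᵀ) * Uᵀ).trace := nuclearNorm_eq_trace_polar hPU hUUtP
  have h1 : ((A * Bᵀ) * Uᵀ).trace = (Bᵀ * (Uᵀ * A)).trace := by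
    rw [Matrix.mul_assoc, Matrix.trace_mul_comm, Matrix.mul_assoc]
  have hM : frobSq (Uᵀ * A) ≤ frobSq A := by
    rw [frobSq_eq_trace, frobSq_eq_trace]
    have e1 : Aᵀ * A - (Uᵀ * A)ᵀ * (Uᵀ * A) = Aᵀ * (1 - U * Uᵀ) * A := by
      rw [Matrix.mul_sub, Matrix.sub_mul, Matrix.mul_one]
      simp only [Matrix.transpose_mul, Matrix.transpose_transpose, Matrix.mul_assoc]
    have hp := psd_trace_nonneg (psd_conj' hU2 A)
    rw [← e1, Matrix.trace_sub] at hp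
    linarith
  have hcs := trace_CS B (Uᵀ * A)
  have hmono : Real.sqrt (frobSq (Uᵀ * A)) * Real.sqrt (frobSq B)
      ≤ Real.sqrt (frobSq A) * Real.sqrt (frobSq B) :=
    mul_le_mul_of_nonneg_right (Real.sqrt_le_sqrt hM) (Real.sqrt_nonneg _)
  have hamgm : Real.sqrt (frobSq A) * Real.sqrt (frobSq B) ≤ (frobSq A + frobSq B) / 2 := by
    nlinarith [sq_nonneg (Real.sqrt (frobSq A) - Real.sqrt (frobSq B)),
      Real.sq_sqrt (frobSq_nonneg A), Real.sq_sqrt (frobSq_nonneg B),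
      Real.sqrt_nonneg (frobSq A), Real.sqrt_nonneg (frobSq B)]
  rw [h0, h1]
  exact le_trans (le_trans hcs hmono) hamgm

lemma cyc3 {r : ℕ} (A B C : Matrix (Fin r) (Fin r) ℝ) :
    (A * (B * C)).trace = (C * (A * B)).trace := by
  rw [← Matrix.mul_assoc, Matrix.trace_mul_comm]

lemma key_psd {r : ℕ} {X Y : Matrix (Fin r) (Fin r) ℝ} (hX : X.PosSemidef) (hY : Y.PosSemidef) :
    ((X - Y) * (X - Y)).trace
      ≤ Real.sqrt (nuclearNorm (X * X - Y * Y)) * (X.trace + Y.trace) := by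
  have hZh : (X - Y).IsHermitian := hX.1.sub hY.1
  have hXt : Xᵀ = X := by
    have h := hX.1.eq; rwa [Matrix.conjTranspose_eq_transpose_of_trivial] at h
  have hYt : Yᵀ = Y := by
    have h := hY.1.eq; rwa [Matrix.conjTranspose_eq_transpose_of_trivial] at h
  have hDh : (X * X - Y * Y).IsHermitian := by
    rw [Matrix.IsHermitian, Matrix.conjTranspose_eq_transpose_of_trivial]
    simp [Matrix.transpose_sub, Matrix.transpose_mul, hXt, hYt]
  obtain ⟨V, hVVt, hVtV, hZspec⟩ := spectral hZh
  obtain ⟨Wm, hWWt, hWtW, hDspec⟩ := spectral hDh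
  set d := hZh.eigenvalues with hddef
  set ev := hDh.eigenvalues with hevdef
  set N := ∑ j, |ev j| with hNdef
  have hNnn : 0 ≤ N := Finset.sum_nonneg fun j _ => abs_nonneg _
  have hN_eq : nuclearNorm (X * X - Y * Y) = N := nuclearNorm_symm hDh
  -- diagonal entries
  have hVZV : Vᵀ * (X - Y) * V = Matrix.diagonal d := by
    rw [hZspec]
    calc Vᵀ * (V * Matrix.diagonal d * Vᵀ) * V
        = (Vᵀ * V) * Matrix.diagonal d * (Vᵀ * V) := by simp only [Matrix.mul_assoc]
      _ = Matrix.diagonal d := by rw [hVtV]; simp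
  set E := fun i => (Vᵀ * (X + Y) * V) i i with hEdef
  have hXd : ∀ i, 0 ≤ (Vᵀ * X * V) i i := fun i => psd_diag_nonneg (psd_conj' hX V) i
  have hYd : ∀ i, 0 ≤ (Vᵀ * Y * V) i i := fun i => psd_diag_nonneg (psd_conj' hY V) i
  have hEsplit : ∀ i, E i = (Vᵀ * X * V) i i + (Vᵀ * Y * V) i i := by
    intro i
    rw [hEdef]
    simp [Matrix.mul_add, Matrix.add_mul, Matrix.add_apply]
  have hdsplit : ∀ i, d i = (Vᵀ * X * V) i i - (Vᵀ * Y * V) i i := by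
    intro i
    have h1 : (Vᵀ * (X - Y) * V) i i = d i := by rw [hVZV]; simp
    rw [← h1]
    simp [Matrix.mul_sub, Matrix.sub_mul, Matrix.sub_apply]
  have hdE : ∀ i, |d i| ≤ E i := by
    intro i
    rw [abs_le]
    constructor
    · rw [hdsplit i, hEsplit i]; have := hXd i; have := hYd i; linarith
    · rw [hdsplit i, hEsplit i]; have := hXd i; have := hYd i; linarith
  have hEnn : ∀ i, 0 ≤ E i := fun i => le_trans (abs_nonneg _) (hdE i)
  have hsumE : ∑ i, E i = X.trace + Y.trace := by
    have h1 : ∑ i, E i = (Vᵀ * (X + Y) * V).trace := by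
      rw [Matrix.trace]; rfl
    rw [h1, trace_conj' hVVt, Matrix.trace_add]
  have hZZ : (X - Y) * (X - Y) = V * Matrix.diagonal (fun i => d i * d i) * Vᵀ := by
    conv_lhs => rw [hZspec]
    rw [conj_mul_conj hVtV]
  have htrZZ : ((X - Y) * (X - Y)).trace = ∑ i, d i * d i := by
    rw [hZZ, trace_conj hVtV, Matrix.trace_diagonal]
  -- case r = 0
  rcases Nat.eq_zero_or_pos r with hr | hr
  · have hL : ((X - Y) * (X - Y)).trace = 0 := by
      rw [htrZZ]
      subst hr
      simp
    rw [hL]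
    exact mul_nonneg (Real.sqrt_nonneg _)
      (add_nonneg (psd_trace_nonneg hX) (psd_trace_nonneg hY))
  · obtain ⟨i₀, _, hi₀⟩ := Finset.exists_max_image Finset.univ (fun i => |d i|)
      ⟨⟨0, hr⟩, Finset.mem_univ _⟩
    set c := |d i₀| with hcdef
    have hcnn : 0 ≤ c := abs_nonneg _
    -- step 1 : trace (Z * D) = trace (Z * Z * (X+Y))
    have hwords : ((X - Y) * (X * Y - Y * X)).trace = 0 := by
      have e : (X - Y) * (X * Y - Y * X)
          = X * (X * Y) - Y * (X * Y) - (X * (Y * X) - Y * (Y * X)) := by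
        noncomm_ring
      rw [e, Matrix.trace_sub, Matrix.trace_sub, Matrix.trace_sub]
      rw [cyc3 X Y X, cyc3 X X Y, cyc3 Y X Y]
      ring
    have hZXY : (X - Y) * (X + Y) = (X * X - Y * Y) + (X * Y - Y * X) := by noncomm_ring
    have step1 : ((X - Y) * (X * X - Y * Y)).trace
        = ((X - Y) * ((X - Y) * (X + Y))).trace := by
      rw [hZXY, Matrix.mul_add, Matrix.trace_add, hwords, add_zero]
    -- step 2 : trace (Z * Z * (X+Y)) = ∑ d i ^2 * E i
    have step2 : ((X - Y) * ((X - Y) * (X + Y))).trace = ∑ i, d i * d i * E i := by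
      rw [← Matrix.mul_assoc, hZZ]
      have e1 : V * Matrix.diagonal (fun i => d i * d i) * Vᵀ * (X + Y)
          = V * (Matrix.diagonal (fun i => d i * d i) * (Vᵀ * (X + Y))) := by
        simp only [Matrix.mul_assoc]
      rw [e1, Matrix.trace_mul_comm, Matrix.mul_assoc, trace_diagonal_mul]
    -- lower bound for trace(Z*D)
    have hlow : c ^ 3 ≤ ((X - Y) * (X * X - Y * Y)).trace := by
      rw [step1, step2]
      have h1 : c ^ 3 ≤ d i₀ * d i₀ * E i₀ := by
        have : c * c ≤ d i₀ * d i₀ := by rw [hcdef, abs_mul_abs_self]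
        have h2 : c ≤ E i₀ := hdE i₀
        nlinarith
      refine le_trans h1 (Finset.single_le_sum (f := fun i => d i * d i * E i) ?_ (Finset.mem_univ i₀))
      intro i _
      exact mul_nonneg (mul_self_nonneg _) (hEnn i)
    -- upper bound for trace(Z*D)
    have hup : ((X - Y) * (X * X - Y * Y)).trace ≤ c * N := by
      have e1 : ((X - Y) * (X * X - Y * Y)).trace
          = ∑ j, ev j * (Wmᵀ * (X - Y) * Wm) j j := by
        conv_lhs => rw [hDspec]
        have e2 : (X - Y) * (Wm * Matrix.diagonal ev * Wmᵀ)
            = ((X - Y) * Wm) * (Matrix.diagonal ev * Wmᵀ) := by simp only [Matrix.mul_assoc]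
        rw [e2, Matrix.trace_mul_comm]
        have e3 : Matrix.diagonal ev * Wmᵀ * ((X - Y) * Wm)
            = Matrix.diagonal ev * (Wmᵀ * (X - Y) * Wm) := by simp only [Matrix.mul_assoc]
        rw [e3, trace_diagonal_mul]
      rw [e1]
      have hF : ∀ j, |(Wmᵀ * (X - Y) * Wm) j j| ≤ c := by
        intro j
        have eF : (Wmᵀ * (X - Y) * Wm) j j = ∑ i, d i * ((Vᵀ * Wm) i j) ^ 2 := by
          have e4 : Wmᵀ * (X - Y) * Wm = (Vᵀ * Wm)ᵀ * Matrix.diagonal d * (Vᵀ * Wm) := by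
            rw [hZspec]
            calc Wmᵀ * (V * Matrix.diagonal d * Vᵀ) * Wm
                = (Wmᵀ * V) * Matrix.diagonal d * (Vᵀ * Wm) := by simp only [Matrix.mul_assoc]
              _ = (Vᵀ * Wm)ᵀ * Matrix.diagonal d * (Vᵀ * Wm) := by
                  rw [Matrix.transpose_mul, Matrix.transpose_transpose]
          rw [e4]
          rw [Matrix.mul_assoc]
          rw [Matrix.mul_apply]
          refine Finset.sum_congr rfl fun i _ => ?_
          rw [Matrix.transpose_apply, Matrix.diagonal_mul]
          ring
        have hsq : ∑ i, ((Vᵀ * Wm) i j) ^ 2 = 1 := by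
          have e5 : ((Vᵀ * Wm)ᵀ * (Vᵀ * Wm)) j j = ∑ i, ((Vᵀ * Wm) i j) ^ 2 := by
            rw [Matrix.mul_apply]
            refine Finset.sum_congr rfl fun i _ => ?_
            rw [Matrix.transpose_apply]; ring
          have e6 : (Vᵀ * Wm)ᵀ * (Vᵀ * Wm) = 1 := by
            rw [Matrix.transpose_mul, Matrix.transpose_transpose]
            calc Wmᵀ * V * (Vᵀ * Wm) = Wmᵀ * (V * Vᵀ) * Wm := by simp only [Matrix.mul_assoc]
              _ = 1 := by rw [hVVt, Matrix.mul_one, hWtW]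
          rw [← e5, e6, Matrix.one_apply_eq]
        rw [eF]
        calc |∑ i, d i * ((Vᵀ * Wm) i j) ^ 2| ≤ ∑ i, |d i * ((Vᵀ * Wm) i j) ^ 2| :=
              Finset.abs_sum_le_sum_abs _ _
          _ ≤ ∑ i, c * ((Vᵀ * Wm) i j) ^ 2 := by
              refine Finset.sum_le_sum fun i _ => ?_
              rw [abs_mul, abs_of_nonneg (sq_nonneg ((Vᵀ * Wm) i j))]
              exact mul_le_mul_of_nonneg_right (hi₀ i (Finset.mem_univ i)) (sq_nonneg _)
          _ = c := by rw [← Finset.mul_sum, hsq, mul_one]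
      calc ∑ j, ev j * (Wmᵀ * (X - Y) * Wm) j j ≤ ∑ j, |ev j| * c := by
            refine Finset.sum_le_sum fun j _ => ?_
            calc ev j * (Wmᵀ * (X - Y) * Wm) j j ≤ |ev j * (Wmᵀ * (X - Y) * Wm) j j| :=
                  le_abs_self _
              _ = |ev j| * |(Wmᵀ * (X - Y) * Wm) j j| := abs_mul _ _
              _ ≤ |ev j| * c := mul_le_mul_of_nonneg_left (hF j) (abs_nonneg _)
        _ = c * N := by rw [← Finset.sum_mul, ← hNdef, mul_comm]
    have hc2 : c ^ 2 ≤ N := by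
      rcases eq_or_lt_of_le hcnn with h | h
      · rw [← h]; simpa using hNnn
      · nlinarith [le_trans hlow hup]
    have hcN : c ≤ Real.sqrt N := Real.le_sqrt_of_sq_le hc2
    rw [htrZZ, hN_eq]
    calc ∑ i, d i * d i ≤ ∑ i, Real.sqrt N * E i := by
          refine Finset.sum_le_sum fun i _ => ?_
          have h1 : |d i| ≤ Real.sqrt N := le_trans (hi₀ i (Finset.mem_univ i)) hcN
          calc d i * d i = |d i| * |d i| := by rw [abs_mul_abs_self]
            _ ≤ Real.sqrt N * E i :=
                mul_le_mul h1 (hdE i) (abs_nonneg _) (Real.sqrt_nonneg _)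
      _ = Real.sqrt N * (X.trace + Y.trace) := by rw [← Finset.mul_sum, hsumE]

lemma one_sub_mul_psd {p q s : ℕ} {S : Matrix (Fin p) (Fin q) ℝ} {T : Matrix (Fin q) (Fin s) ℝ}
    (hS : (1 - Sᵀ * S).PosSemidef) (hT : (1 - Tᵀ * T).PosSemidef) :
    (1 - (S * T)ᵀ * (S * T)).PosSemidef := by
  have e2 : (S * T)ᵀ * (S * T) = Tᵀ * (Sᵀ * S) * T := by
    simp only [Matrix.transpose_mul, Matrix.mul_assoc]
  have e3 : Tᵀ * (1 - Sᵀ * S) * T = Tᵀ * T - Tᵀ * (Sᵀ * S) * T := by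
    rw [Matrix.mul_sub, Matrix.mul_one, Matrix.sub_mul]
  have e4 : 1 - (S * T)ᵀ * (S * T) = (1 - Tᵀ * T) + Tᵀ * (1 - Sᵀ * S) * T := by
    rw [e2, e3]; abel
  rw [e4]
  exact hT.add (psd_conj' hS T)

end NucAux

/-- `| ‖ABᵀ‖_* − (‖A‖_F² + ‖B‖_F²)/2 | ≤ √(‖AᵀA − BᵀB‖_*) · (‖A‖_* + ‖B‖_*)/2`. -/
theorem nuclearNorm_gap_bound_sym {m n r : ℕ}
    (A : Matrix (Fin m) (Fin r) ℝ) (B : Matrix (Fin n) (Fin r) ℝ) :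
    |nuclearNorm (A * Bᵀ) - (frobSq A + frobSq B) / 2| ≤
      Real.sqrt (nuclearNorm (Aᵀ * A - Bᵀ * B)) * (nuclearNorm A + nuclearNorm B) / 2 := by
  obtain ⟨X, UA, hXpsd, hXeq, hXX, hXtr, hUA1, hUA2⟩ := NucAux.exists_balanced A
  obtain ⟨Y, UB, hYpsd, hYeq, hYY, hYtr, hUB1, hUB2⟩ := NucAux.exists_balanced B
  have hQ1 : (1 - (UA * UBᵀ)ᵀ * (UA * UBᵀ)).PosSemidef := by
    refine NucAux.one_sub_mul_psd hUA1 ?_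
    rwa [Matrix.transpose_transpose]
  have hQ2 : (1 - (UA * UBᵀ) * (UA * UBᵀ)ᵀ).PosSemidef := by
    have h' : (1 - (UAᵀ)ᵀ * UAᵀ).PosSemidef := by rwa [Matrix.transpose_transpose]
    have := NucAux.one_sub_mul_psd hUB1 h'
    simpa [Matrix.transpose_mul, Matrix.transpose_transpose, Matrix.mul_assoc] using this
  have hYt : Yᵀ = Y := by
    have h2 := hYpsd.1.eq
    rwa [Matrix.conjTranspose_eq_transpose_of_trivial] at h2
  have hlow : (X * Y).trace ≤ nuclearNorm (A * Bᵀ) := by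
    have h := NucAux.trace_le_nuclearNorm (A * Bᵀ) (UA * UBᵀ) hQ1 hQ2
    have e : ((UA * UBᵀ)ᵀ * (A * Bᵀ)).trace = (X * Y).trace := by
      have e1 : (UA * UBᵀ)ᵀ * (A * Bᵀ) = UB * ((UAᵀ * A) * Bᵀ) := by
        simp only [Matrix.transpose_mul, Matrix.transpose_transpose, Matrix.mul_assoc]
      rw [e1, Matrix.trace_mul_comm, hXeq, Matrix.mul_assoc]
      have eY : Bᵀ * UB = Y := by
        have h3 := congrArg Matrix.transpose hYeq
        simpa [Matrix.transpose_mul, Matrix.transpose_transpose, hYt] using h3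
      rw [eY]
    rwa [e] at h
  have hfA : frobSq A = (X * X).trace := by rw [NucAux.frobSq_eq_trace, ← hXX]
  have hfB : frobSq B = (Y * Y).trace := by rw [NucAux.frobSq_eq_trace, ← hYY]
  have hgap : (X * X).trace + (Y * Y).trace - 2 * (X * Y).trace
      = ((X - Y) * (X - Y)).trace := by
    rw [Matrix.sub_mul, Matrix.mul_sub, Matrix.mul_sub, Matrix.trace_sub, Matrix.trace_sub,
      Matrix.trace_sub, Matrix.trace_mul_comm Y X]
    ring
  have hkey := NucAux.key_psd hXpsd hYpsd
  rw [hXX, hYY, hXtr, hYtr] at hkey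
  have hub := NucAux.nuclear_le_half A B
  have hδ : 0 ≤ Real.sqrt (nuclearNorm (Aᵀ * A - Bᵀ * B))
      * (nuclearNorm A + nuclearNorm B) / 2 := by
    have := NucAux.nuclearNorm_nonneg A
    have := NucAux.nuclearNorm_nonneg B
    have := Real.sqrt_nonneg (nuclearNorm (Aᵀ * A - Bᵀ * B))
    positivity
  rw [abs_le]
  constructor
  · linarith
  · linarith
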